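/- The deformed Bessel function J_n^μ satisfies the third-order differential-difference equation ((xD_μ − [n]_μ)(xD_μ − [−n]_μ)(xD_μ + β_n + 2μ − 1) + x²(xD_μ + β_n + 1)) J_n^μ = 0, where β_n = 0 if n is even and β_n = 1 − 2μ if n is odd. -/

import Mathlib

/-- The Dunkl operator `D_μ f(x) = f'(x) + μ (f(x) - f(-x))/x`. -/
noncomputable def dunkl (μ : ℝ) (f : ℝ → ℝ) (x : ℝ) : ℝ :=
  deriv f x + μ * (f x - f (-x)) / x

/-- The deformed integer `[n]_μ = n + μ (1 - (-1)^n)`. -/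
noncomputable def dIdx (μ : ℝ) (n : ℕ) : ℝ := n + μ * (1 - (-1 : ℝ) ^ n)

/-- The deformed factorial `[n]_μ!`. -/
noncomputable def dFact (μ : ℝ) : ℕ → ℝ
  | 0 => 1
  | n + 1 => dIdx μ (n + 1) * dFact μ n

/-- The deformed Bessel function `J_n^μ`. -/
noncomputable def Jmu (μ : ℝ) (n : ℕ) (x : ℝ) : ℝ :=
  ∑' k : ℕ, (-1 : ℝ) ^ k * (Nat.factorial (2 * k + n)) /
      ((Nat.factorial k) * (Nat.factorial (k + n)) * dFact μ (2 * k + n)) *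
    (x / 2) ^ (2 * k + n)

/-- The operator `f ↦ x D_μ f + c f`. -/
noncomputable def opA (μ : ℝ) (c : ℝ) (f : ℝ → ℝ) : ℝ → ℝ :=
  fun x => x * dunkl μ f x + c * f x

/-- `β_n`: `0` for even `n`, `1 - 2μ` for odd `n`. -/
noncomputable def betaN (μ : ℝ) (n : ℕ) : ℝ := if Even n then 0 else 1 - 2 * μ

namespace JmuAux

lemma neg_one_pow_two_mul_add (j n : ℕ) : (-1 : ℝ) ^ (2 * j + n) = (-1) ^ n := by
  rw [pow_add, pow_mul, neg_one_sq, one_pow, one_mul]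

lemma dIdx_nonneg_aux (μ : ℝ) (hμ : 0 ≤ μ) (m : ℕ) : 0 ≤ μ * (1 - (-1 : ℝ) ^ m) := by
  rcases Nat.even_or_odd m with h | h
  · rw [h.neg_one_pow]; simp
  · rw [h.neg_one_pow]; nlinarith

lemma dIdx_ge (μ : ℝ) (hμ : 0 ≤ μ) (m : ℕ) : (m : ℝ) ≤ dIdx μ m := by
  have := dIdx_nonneg_aux μ hμ m
  rw [dIdx]; linarith

lemma dIdx_pos (μ : ℝ) (hμ : 0 ≤ μ) (m : ℕ) (hm : 1 ≤ m) : 0 < dIdx μ m :=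
  lt_of_lt_of_le (by exact_mod_cast hm) (dIdx_ge μ hμ m)

lemma dFact_ge (μ : ℝ) (hμ : 0 ≤ μ) : ∀ m : ℕ, (m.factorial : ℝ) ≤ dFact μ m := by
  intro m
  induction m with
  | zero => simp [dFact]
  | succ m ih =>
      rw [dFact, Nat.factorial_succ]
      push_cast
      have h1 := dIdx_ge μ hμ (m + 1)
      have h2 : (0:ℝ) < (m.factorial : ℝ) := by exact_mod_cast m.factorial_pos
      have h3 : ((m:ℝ) + 1) ≤ dIdx μ (m+1) := by push_cast at h1; linarith
      nlinarith

lemma dFact_pos (μ : ℝ) (hμ : 0 ≤ μ) (m : ℕ) : 0 < dFact μ m :=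
  lt_of_lt_of_le (by exact_mod_cast m.factorial_pos) (dFact_ge μ hμ m)

lemma two_mul_add_le_nat (n k : ℕ) : 2 * k + n ≤ (n + 2) * 2 ^ k := by
  induction k with
  | zero => omega
  | succ k ih =>
      have h1 : 1 ≤ 2 ^ k := Nat.one_le_two_pow
      have : (n + 2) * 2 ^ (k + 1) = (n + 2) * 2 ^ k + (n + 2) * 2 ^ k := by ring
      have h2 : 2 ≤ (n + 2) * 2 ^ k := by nlinarith
      omega

lemma two_mul_add_le (n k : ℕ) : (2 * (k:ℝ) + n) ≤ ((n:ℝ) + 2) * 2 ^ k := by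
  have := two_mul_add_le_nat n k
  exact_mod_cast this

def isGood (b : ℕ → ℝ) : Prop :=
  ∃ C M : ℝ, 0 ≤ C ∧ 0 ≤ M ∧ ∀ k, |b k| ≤ C * M ^ k / (k.factorial : ℝ)

lemma summable_aux (C M : ℝ) : Summable (fun k : ℕ => C * M ^ k / (k.factorial : ℝ)) := by
  simpa [mul_div_assoc] using (Real.summable_pow_div_factorial M).mul_left C

set_option maxHeartbeats 1000000 in
lemma isGood.summable_pow {b : ℕ → ℝ} (hb : isGood b) (x : ℝ) (n : ℕ) :
    Summable fun k => b k * x ^ (2 * k + n) := by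
  obtain ⟨C, M, hC, hM, h⟩ := hb
  apply Summable.of_norm_bounded (g := fun k => (C * |x| ^ n) * (M * x ^ 2) ^ k / (k.factorial : ℝ))
    (summable_aux _ _)
  intro k
  have h1 : ‖b k * x ^ (2 * k + n)‖ = |b k| * |x| ^ (2 * k + n) := by
    rw [norm_mul, norm_pow]; rfl
  rw [h1]
  have h2 : |x| ^ (2 * k + n) = (x ^ 2) ^ k * |x| ^ n := by
    rw [pow_add, pow_mul, sq_abs]
  rw [h2]
  have h3 := h k
  have h4 : (0:ℝ) < (k.factorial : ℝ) := by exact_mod_cast k.factorial_pos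
  have h5 : (0:ℝ) ≤ (x ^ 2) ^ k * |x| ^ n := by positivity
  calc |b k| * ((x ^ 2) ^ k * |x| ^ n)
      ≤ (C * M ^ k / (k.factorial : ℝ)) * ((x ^ 2) ^ k * |x| ^ n) := by
        apply mul_le_mul_of_nonneg_right h3 h5
    _ = (C * |x| ^ n) * (M * x ^ 2) ^ k / (k.factorial : ℝ) := by
        rw [mul_pow]; ring

set_option maxHeartbeats 1000000 in
lemma isGood.hasDerivAt {b : ℕ → ℝ} (hb : isGood b) (n : ℕ) (y : ℝ) :
    HasDerivAt (fun z => ∑' k, b k * z ^ (2 * k + n))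
      (∑' k, b k * ((2 * k + n : ℕ) * y ^ (2 * k + n - 1))) y := by
  obtain ⟨C, M, hC, hM, h⟩ := hb
  set R : ℝ := |y| + 1 with hRdef
  have hR1 : 1 ≤ R := by have := abs_nonneg y; linarith
  have hR0 : 0 ≤ R := by linarith
  have hy : y ∈ Metric.ball (0:ℝ) R := by
    rw [Metric.mem_ball, dist_zero_right, Real.norm_eq_abs]; simp [hRdef]
  refine hasDerivAt_tsum_of_isPreconnected
    (u := fun k => (C * ((n:ℝ) + 2) * R ^ n) * (2 * M * R ^ 2) ^ k / (k.factorial : ℝ))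
    (g := fun k z => b k * z ^ (2 * k + n))
    (g' := fun k z => b k * ((2 * k + n : ℕ) * z ^ (2 * k + n - 1)))
    (summable_aux _ _) Metric.isOpen_ball ((convex_ball (0:ℝ) R).isPreconnected)
    (fun k z _ => (hasDerivAt_pow (2 * k + n) z).const_mul (b k))
    (fun k z hz => ?_) hy ?_ hy
  · have hzR : |z| ≤ R := by
      rw [Metric.mem_ball, dist_zero_right, Real.norm_eq_abs] at hz; linarith
    have h4 : (0:ℝ) < (k.factorial : ℝ) := by exact_mod_cast k.factorial_pos
    have e1 : ‖b k * ((2 * k + n : ℕ) * z ^ (2 * k + n - 1))‖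
        = |b k| * ((2 * (k:ℝ) + n) * |z| ^ (2 * k + n - 1)) := by
      simp only [Real.norm_eq_abs, abs_mul, abs_pow, Nat.abs_cast]
      push_cast
      ring
    rw [e1]
    have step : |b k| * ((2 * (k:ℝ) + n) * |z| ^ (2 * k + n - 1))
        ≤ (C * M ^ k / (k.factorial : ℝ)) * ((((n:ℝ) + 2) * 2 ^ k) * (R ^ n * (R ^ 2) ^ k)) := by
      apply mul_le_mul (h k) ?_ (by positivity) (by positivity)
      apply mul_le_mul (two_mul_add_le n k) ?_ (by positivity) (by positivity)
      calc |z| ^ (2 * k + n - 1) ≤ R ^ (2 * k + n - 1) :=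
            pow_le_pow_left₀ (abs_nonneg z) hzR _
        _ ≤ R ^ (2 * k + n) := pow_le_pow_right₀ hR1 (Nat.sub_le _ _)
        _ = R ^ n * (R ^ 2) ^ k := by rw [pow_add, pow_mul]; ring
    calc |b k| * ((2 * (k:ℝ) + n) * |z| ^ (2 * k + n - 1))
        ≤ (C * M ^ k / (k.factorial : ℝ)) * ((((n:ℝ) + 2) * 2 ^ k) * (R ^ n * (R ^ 2) ^ k)) := step
      _ = (C * ((n:ℝ) + 2) * R ^ n) * (2 * M * R ^ 2) ^ k / (k.factorial : ℝ) := by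
          rw [mul_pow, mul_pow]; ring
  · exact isGood.summable_pow ⟨C, M, hC, hM, h⟩ y n

lemma dIdx_two_mul_add (μ : ℝ) (k n : ℕ) :
    dIdx μ (2 * k + n) = 2 * (k:ℝ) + n + μ * (1 - (-1:ℝ) ^ n) := by
  rw [dIdx, neg_one_pow_two_mul_add]; push_cast; ring

/-- coefficient transform under `opA`. -/
noncomputable def bb (μ : ℝ) (n : ℕ) (c : ℝ) (b : ℕ → ℝ) : ℕ → ℝ :=
  fun k => (dIdx μ (2 * k + n) + c) * b k

lemma isGood.affine {b : ℕ → ℝ} (hb : isGood b) (n : ℕ) (a : ℝ) :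
    isGood (fun k : ℕ => (2 * (k:ℝ) + n + a) * b k) := by
  obtain ⟨C, M, hC, hM, h⟩ := hb
  refine ⟨C * ((n:ℝ) + 2 + |a|), 2 * M, by positivity, by positivity, fun k => ?_⟩
  have h4 : (0:ℝ) < (k.factorial : ℝ) := by exact_mod_cast k.factorial_pos
  have t4 : (1:ℝ) ≤ 2 ^ k := one_le_pow₀ (by norm_num)
  have h1 : |2 * (k:ℝ) + n + a| ≤ ((n:ℝ) + 2 + |a|) * 2 ^ k := by
    have t1 : |2 * (k:ℝ) + n + a| ≤ |2 * (k:ℝ) + n| + |a| := abs_add_le _ _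
    have t2 : |2 * (k:ℝ) + n| = 2 * (k:ℝ) + n := abs_of_nonneg (by positivity)
    have t3 := two_mul_add_le n k
    nlinarith [abs_nonneg a]
  calc |(2 * (k:ℝ) + n + a) * b k| = |2 * (k:ℝ) + n + a| * |b k| := abs_mul _ _
    _ ≤ (((n:ℝ) + 2 + |a|) * 2 ^ k) * (C * M ^ k / (k.factorial : ℝ)) := by
        apply mul_le_mul h1 (h k) (abs_nonneg _) (by positivity)
    _ = C * ((n:ℝ) + 2 + |a|) * (2 * M) ^ k / (k.factorial : ℝ) := by
        rw [mul_pow]; ring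

lemma bb_eq (μ : ℝ) (n : ℕ) (c : ℝ) (b : ℕ → ℝ) :
    bb μ n c b = fun k : ℕ => (2 * (k:ℝ) + n + (μ * (1 - (-1:ℝ) ^ n) + c)) * b k := by
  funext k
  simp only [bb, dIdx_two_mul_add]
  ring

lemma isGood.bb {b : ℕ → ℝ} (hb : isGood b) (μ : ℝ) (n : ℕ) (c : ℝ) :
    isGood (bb μ n c b) := by
  rw [bb_eq]
  exact hb.affine n _

lemma opA_congr (μ c : ℝ) (f g : ℝ → ℝ) (x : ℝ) (hx : x ≠ 0)
    (h : ∀ z, z ≠ 0 → f z = g z) : opA μ c f x = opA μ c g x := by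
  have hev : f =ᶠ[nhds x] g := by
    filter_upwards [isOpen_compl_singleton.mem_nhds
      (by simpa using hx : x ∈ ({(0:ℝ)}ᶜ : Set ℝ))] with z hz
    exact h z (by simpa using hz)
  rw [opA, opA, dunkl, dunkl, hev.deriv_eq, h x hx, h (-x) (neg_ne_zero.mpr hx)]

lemma mul_pow_pred (x : ℝ) (m : ℕ) : x * ((m:ℝ) * x ^ (m - 1)) = (m:ℝ) * x ^ m := by
  cases m with
  | zero => simp
  | succ m => rw [Nat.add_sub_cancel, pow_succ]; push_cast; ring

set_option maxHeartbeats 1000000 in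
lemma opA_tsum (μ c : ℝ) (n : ℕ) (b : ℕ → ℝ) (hb : isGood b) (x : ℝ) (hx : x ≠ 0) :
    opA μ c (fun z => ∑' k, b k * z ^ (2 * k + n)) x
      = ∑' k, bb μ n c b k * x ^ (2 * k + n) := by
  have hd : deriv (fun z => ∑' k, b k * z ^ (2 * k + n)) x
      = ∑' k, b k * ((2 * k + n : ℕ) * x ^ (2 * k + n - 1)) := (hb.hasDerivAt n x).deriv
  have hneg : (∑' k, b k * (-x) ^ (2 * k + n)) = (-1:ℝ) ^ n * ∑' k, b k * x ^ (2 * k + n) := by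
    rw [← tsum_mul_left]
    apply tsum_congr; intro k
    rw [neg_pow, neg_one_pow_two_mul_add]; ring
  rw [opA, dunkl, hd]
  beta_reduce
  rw [hneg]
  set S := ∑' k, b k * x ^ (2 * k + n) with hS
  set D := ∑' k, b k * ((2 * k + n : ℕ) * x ^ (2 * k + n - 1)) with hD
  have hxd : x * (D + μ * (S - (-1:ℝ) ^ n * S) / x) + c * S
      = x * D + ((μ * (1 - (-1:ℝ) ^ n) + c) * S) := by
    field_simp
    ring
  rw [hxd]
  have hxD : x * D = ∑' k : ℕ, ((2 * (k:ℝ) + n) * b k) * x ^ (2 * k + n) := by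
    rw [hD, ← tsum_mul_left]
    apply tsum_congr; intro k
    have := mul_pow_pred x (2 * k + n)
    push_cast at this ⊢
    linear_combination b k * this
  have hS2 : (μ * (1 - (-1:ℝ) ^ n) + c) * S
      = ∑' k, ((μ * (1 - (-1:ℝ) ^ n) + c) * b k) * x ^ (2 * k + n) := by
    rw [hS, ← tsum_mul_left]
    apply tsum_congr; intro k; ring
  rw [hxD, hS2]
  have s1 : Summable (fun k : ℕ => ((2 * (k:ℝ) + n) * b k) * x ^ (2 * k + n)) := by
    have := (hb.affine n 0).summable_pow x n
    apply this.congr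
    intro k; push_cast; ring
  have s2 : Summable (fun k : ℕ => ((μ * (1 - (-1:ℝ) ^ n) + c) * b k) * x ^ (2 * k + n)) := by
    have := (hb.summable_pow x n).mul_left (μ * (1 - (-1:ℝ) ^ n) + c)
    apply this.congr
    intro k; ring
  rw [← Summable.tsum_add s1 s2]
  apply tsum_congr; intro k
  simp only [bb, dIdx_two_mul_add]
  ring

/-- The coefficients of `Jmu` as a plain power series in `x`. -/
noncomputable def coef (μ : ℝ) (n : ℕ) (k : ℕ) : ℝ :=
  (-1 : ℝ) ^ k * ((2 * k + n).factorial : ℝ) /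
      ((k.factorial : ℝ) * ((k + n).factorial : ℝ) * dFact μ (2 * k + n)) / 2 ^ (2 * k + n)

lemma Jmu_eq (μ : ℝ) (n : ℕ) :
    Jmu μ n = fun z => ∑' k, coef μ n k * z ^ (2 * k + n) := by
  funext z
  rw [Jmu]
  apply tsum_congr; intro k
  rw [coef, div_pow]
  ring

lemma isGood_coef (μ : ℝ) (hμ : 0 ≤ μ) (n : ℕ) : isGood (coef μ n) := by
  refine ⟨1, 1, zero_le_one, zero_le_one, fun k => ?_⟩
  have hF : (0:ℝ) < dFact μ (2 * k + n) := dFact_pos μ hμ _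
  have hkf : (0:ℝ) < (k.factorial : ℝ) := by exact_mod_cast k.factorial_pos
  have hknf : (1:ℝ) ≤ ((k + n).factorial : ℝ) := by
    exact_mod_cast Nat.one_le_iff_ne_zero.mpr (k + n).factorial_ne_zero
  have hmf : (0:ℝ) < ((2 * k + n).factorial : ℝ) := by exact_mod_cast (2 * k + n).factorial_pos
  have hd : ((2 * k + n).factorial : ℝ) ≤ dFact μ (2 * k + n) := dFact_ge μ hμ _
  have h2m : (1:ℝ) ≤ 2 ^ (2 * k + n) := one_le_pow₀ (by norm_num)
  have e1 : |coef μ n k| = ((2 * k + n).factorial : ℝ) /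
      ((k.factorial : ℝ) * ((k + n).factorial : ℝ) * dFact μ (2 * k + n)) / 2 ^ (2 * k + n) := by
    rw [coef, abs_div, abs_div, abs_mul, abs_pow, abs_neg, abs_one, one_pow, one_mul,
      Nat.abs_cast, abs_mul, abs_mul, Nat.abs_cast, Nat.abs_cast, abs_of_pos hF, abs_pow, abs_two]
  rw [e1]
  calc ((2 * k + n).factorial : ℝ) /
      ((k.factorial : ℝ) * ((k + n).factorial : ℝ) * dFact μ (2 * k + n)) / 2 ^ (2 * k + n)
      ≤ ((2 * k + n).factorial : ℝ) /
        ((k.factorial : ℝ) * 1 * ((2 * k + n).factorial : ℝ)) / 1 := by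
        gcongr <;> positivity
    _ = 1 * 1 ^ k / (k.factorial : ℝ) := by field_simp; ring

lemma coef_succ (μ : ℝ) (hμ : 0 ≤ μ) (n k : ℕ) :
    ((k:ℝ)+1) * ((k:ℝ)+n+1) * dIdx μ (2*k+n+2) * dIdx μ (2*k+n+1) * 4 * coef μ n (k+1)
      = -((2*(k:ℝ)+n+2) * (2*(k:ℝ)+n+1) * coef μ n k) := by
  have hkf : ((k.factorial : ℝ)) ≠ 0 := Nat.cast_ne_zero.mpr k.factorial_ne_zero
  have hknf : (((k+n).factorial : ℝ)) ≠ 0 := Nat.cast_ne_zero.mpr (k+n).factorial_ne_zero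
  have hdF : dFact μ (2*k+n) ≠ 0 := ne_of_gt (dFact_pos μ hμ _)
  have h2 : (2:ℝ) ^ (2*k+n) ≠ 0 := by positivity
  have hd2 : dIdx μ (2*k+n+2) ≠ 0 := ne_of_gt (dIdx_pos μ hμ _ (by omega))
  have hd1 : dIdx μ (2*k+n+1) ≠ 0 := ne_of_gt (dIdx_pos μ hμ _ (by omega))
  have i1 : 2*(k+1)+n = (2*k+n+1)+1 := by omega
  have i2 : (k+1)+n = (k+n)+1 := by omega
  rw [coef, coef, i1, i2]
  simp only [Nat.factorial_succ, dFact, pow_succ]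
  push_cast
  field_simp
  ring

lemma key_rec (μ : ℝ) (hμ : 0 ≤ μ) (n k : ℕ) :
    (dIdx μ (2*(k+1)+n) + -(dIdx μ n)) *
      ((dIdx μ (2*(k+1)+n) + -((-(n:ℝ)) + μ*(1-(-1:ℝ)^n))) *
        ((dIdx μ (2*(k+1)+n) + (betaN μ n + 2*μ - 1)) * coef μ n (k+1)))
      + (dIdx μ (2*k+n) + (betaN μ n + 1)) * coef μ n k = 0 := by
  have i1 : 2*(k+1)+n = 2*k+n+2 := by omega
  rw [i1]
  have hcs := coef_succ μ hμ n k
  have e21 : (-1:ℝ)^(2*k+n+2) = (-1:ℝ)^n := by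
    have i2 : 2*k+n+2 = 2*(k+1)+n := by omega
    rw [i2, neg_one_pow_two_mul_add]
  have e20 : (-1:ℝ)^(2*k+n) = (-1:ℝ)^n := neg_one_pow_two_mul_add k n
  have e2odd : (-1:ℝ)^(2*k+n+1) = -(-1:ℝ)^n := by
    rw [pow_succ, e20]; ring
  have hk0 : (0:ℝ) ≤ (k:ℝ) := Nat.cast_nonneg k
  have hn0 : (0:ℝ) ≤ (n:ℝ) := Nat.cast_nonneg n
  rcases Nat.even_or_odd n with hn | hn
  · have en : (-1:ℝ)^n = 1 := hn.neg_one_pow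
    have hb : betaN μ n = 0 := by rw [betaN, if_pos hn]
    have d0 : dIdx μ n = (n:ℝ) := by rw [dIdx, en]; ring
    have d2 : dIdx μ (2*k+n+2) = 2*(k:ℝ)+n+2 := by rw [dIdx, e21, en]; push_cast; ring
    have d1 : dIdx μ (2*k+n+1) = 2*(k:ℝ)+n+1+2*μ := by rw [dIdx, e2odd, en]; push_cast; ring
    have dk : dIdx μ (2*k+n) = 2*(k:ℝ)+n := by rw [dIdx, e20, en]; push_cast; ring
    rw [d2, d1] at hcs
    rw [d2, dk, d0, hb, en]
    have hD : ((k:ℝ)+1) * ((k:ℝ)+n+1) * (2*(k:ℝ)+n+2) * (2*(k:ℝ)+n+1+2*μ) * 4 ≠ 0 := by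
      apply ne_of_gt
      have t1 : (0:ℝ) < (k:ℝ)+1 := by linarith
      have t2 : (0:ℝ) < (k:ℝ)+n+1 := by linarith
      have t3 : (0:ℝ) < 2*(k:ℝ)+n+2 := by linarith
      have t4 : (0:ℝ) < 2*(k:ℝ)+n+1+2*μ := by linarith
      positivity
    have hc1 : coef μ n (k+1) = -((2*(k:ℝ)+n+2) * (2*(k:ℝ)+n+1) * coef μ n k) /
        (((k:ℝ)+1) * ((k:ℝ)+n+1) * (2*(k:ℝ)+n+2) * (2*(k:ℝ)+n+1+2*μ) * 4) := by
      rw [eq_div_iff hD]; linear_combination hcs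
    rw [hc1]
    field_simp
    ring
  · have en : (-1:ℝ)^n = -1 := hn.neg_one_pow
    have hb : betaN μ n = 1 - 2*μ := by rw [betaN, if_neg (Nat.not_even_iff_odd.mpr hn)]
    have d0 : dIdx μ n = (n:ℝ) + 2*μ := by rw [dIdx, en]; ring
    have d2 : dIdx μ (2*k+n+2) = 2*(k:ℝ)+n+2+2*μ := by rw [dIdx, e21, en]; push_cast; ring
    have d1 : dIdx μ (2*k+n+1) = 2*(k:ℝ)+n+1 := by rw [dIdx, e2odd, en]; push_cast; ring
    have dk : dIdx μ (2*k+n) = 2*(k:ℝ)+n+2*μ := by rw [dIdx, e20, en]; push_cast; ring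
    rw [d2, d1] at hcs
    rw [d2, dk, d0, hb, en]
    have hD : ((k:ℝ)+1) * ((k:ℝ)+n+1) * (2*(k:ℝ)+n+2+2*μ) * (2*(k:ℝ)+n+1) * 4 ≠ 0 := by
      apply ne_of_gt
      have t1 : (0:ℝ) < (k:ℝ)+1 := by linarith
      have t2 : (0:ℝ) < (k:ℝ)+n+1 := by linarith
      have t3 : (0:ℝ) < 2*(k:ℝ)+n+2+2*μ := by linarith
      have t4 : (0:ℝ) < 2*(k:ℝ)+n+1 := by linarith
      positivity
    have hc1 : coef μ n (k+1) = -((2*(k:ℝ)+n+2) * (2*(k:ℝ)+n+1) * coef μ n k) /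
        (((k:ℝ)+1) * ((k:ℝ)+n+1) * (2*(k:ℝ)+n+2+2*μ) * (2*(k:ℝ)+n+1) * 4) := by
      rw [eq_div_iff hD]; linear_combination hcs
    rw [hc1]
    field_simp
    ring

end JmuAux

/-- The third-order differential-difference equation satisfied by `J_n^μ`:
`((xD_μ - [n]_μ)(xD_μ - [-n]_μ)(xD_μ + β_n + 2μ - 1) + x²(xD_μ + β_n + 1)) J_n^μ = 0`. -/
theorem Jmu_diff_eq (μ : ℝ) (hμ : 0 ≤ μ) (n : ℕ) (x : ℝ) (hx : x ≠ 0) :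
    opA μ (-(dIdx μ n)) (opA μ (-((-(n : ℝ)) + μ * (1 - (-1 : ℝ) ^ n)))
        (opA μ (betaN μ n + 2 * μ - 1) (Jmu μ n))) x +
      x ^ 2 * opA μ (betaN μ n + 1) (Jmu μ n) x = 0 := by
  open JmuAux in
  have hg0 : JmuAux.isGood (JmuAux.coef μ n) := JmuAux.isGood_coef μ hμ n
  have hg1 := hg0.bb μ n (betaN μ n + 2 * μ - 1)
  have hg2 := hg1.bb μ n (-((-(n : ℝ)) + μ * (1 - (-1 : ℝ) ^ n)))
  have hg3 := hg2.bb μ n (-(dIdx μ n))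
  have hg' := hg0.bb μ n (betaN μ n + 1)
  have h1 : ∀ z, z ≠ 0 → opA μ (betaN μ n + 2 * μ - 1) (Jmu μ n) z
      = ∑' k, JmuAux.bb μ n (betaN μ n + 2 * μ - 1) (JmuAux.coef μ n) k * z ^ (2 * k + n) := by
    intro z hz
    rw [JmuAux.Jmu_eq μ n]
    exact JmuAux.opA_tsum _ _ _ _ hg0 z hz
  have h2 : ∀ z, z ≠ 0 → opA μ (-((-(n : ℝ)) + μ * (1 - (-1 : ℝ) ^ n)))
        (opA μ (betaN μ n + 2 * μ - 1) (Jmu μ n)) z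
      = ∑' k, JmuAux.bb μ n (-((-(n : ℝ)) + μ * (1 - (-1 : ℝ) ^ n)))
          (JmuAux.bb μ n (betaN μ n + 2 * μ - 1) (JmuAux.coef μ n)) k * z ^ (2 * k + n) := by
    intro z hz
    rw [JmuAux.opA_congr μ _ _
      (fun w => ∑' k, JmuAux.bb μ n (betaN μ n + 2 * μ - 1) (JmuAux.coef μ n) k * w ^ (2 * k + n))
      z hz h1]
    exact JmuAux.opA_tsum _ _ _ _ hg1 z hz
  have h3 : opA μ (-(dIdx μ n)) (opA μ (-((-(n : ℝ)) + μ * (1 - (-1 : ℝ) ^ n)))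
        (opA μ (betaN μ n + 2 * μ - 1) (Jmu μ n))) x
      = ∑' k, JmuAux.bb μ n (-(dIdx μ n)) (JmuAux.bb μ n (-((-(n : ℝ)) + μ * (1 - (-1 : ℝ) ^ n)))
          (JmuAux.bb μ n (betaN μ n + 2 * μ - 1) (JmuAux.coef μ n))) k * x ^ (2 * k + n) := by
    rw [JmuAux.opA_congr μ _ _
      (fun w => ∑' k, JmuAux.bb μ n (-((-(n : ℝ)) + μ * (1 - (-1 : ℝ) ^ n)))
          (JmuAux.bb μ n (betaN μ n + 2 * μ - 1) (JmuAux.coef μ n)) k * w ^ (2 * k + n))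
      x hx h2]
    exact JmuAux.opA_tsum _ _ _ _ hg2 x hx
  have h1' : opA μ (betaN μ n + 1) (Jmu μ n) x
      = ∑' k, JmuAux.bb μ n (betaN μ n + 1) (JmuAux.coef μ n) k * x ^ (2 * k + n) := by
    rw [JmuAux.Jmu_eq μ n]
    exact JmuAux.opA_tsum _ _ _ _ hg0 x hx
  rw [h3, h1']
  have hsum3 := hg3.summable_pow x n
  rw [Summable.tsum_eq_zero_add hsum3]
  have hb30 : JmuAux.bb μ n (-(dIdx μ n)) (JmuAux.bb μ n (-((-(n : ℝ)) + μ * (1 - (-1 : ℝ) ^ n)))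
      (JmuAux.bb μ n (betaN μ n + 2 * μ - 1) (JmuAux.coef μ n))) 0 * x ^ (2 * 0 + n) = 0 := by
    have h0 : JmuAux.bb μ n (-(dIdx μ n)) (JmuAux.bb μ n (-((-(n : ℝ)) + μ * (1 - (-1 : ℝ) ^ n)))
        (JmuAux.bb μ n (betaN μ n + 2 * μ - 1) (JmuAux.coef μ n))) 0 = 0 := by
      show (dIdx μ (2 * 0 + n) + -(dIdx μ n)) * _ = 0
      norm_num
    rw [h0, zero_mul]
  rw [hb30, zero_add, ← tsum_mul_left]
  have s1 : Summable (fun k : ℕ =>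
      JmuAux.bb μ n (-(dIdx μ n)) (JmuAux.bb μ n (-((-(n : ℝ)) + μ * (1 - (-1 : ℝ) ^ n)))
        (JmuAux.bb μ n (betaN μ n + 2 * μ - 1) (JmuAux.coef μ n))) (k + 1) * x ^ (2 * (k + 1) + n)) :=
    (summable_nat_add_iff 1).mpr hsum3
  have s2 : Summable (fun k : ℕ => x ^ 2 *
      (JmuAux.bb μ n (betaN μ n + 1) (JmuAux.coef μ n) k * x ^ (2 * k + n))) :=
    (hg'.summable_pow x n).mul_left _
  rw [← Summable.tsum_add s1 s2]
  have hzero : ∀ k : ℕ,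
      JmuAux.bb μ n (-(dIdx μ n)) (JmuAux.bb μ n (-((-(n : ℝ)) + μ * (1 - (-1 : ℝ) ^ n)))
        (JmuAux.bb μ n (betaN μ n + 2 * μ - 1) (JmuAux.coef μ n))) (k + 1) * x ^ (2 * (k + 1) + n)
      + x ^ 2 * (JmuAux.bb μ n (betaN μ n + 1) (JmuAux.coef μ n) k * x ^ (2 * k + n)) = 0 := by
    intro k
    simp only [JmuAux.bb]
    linear_combination x ^ (2 * (k + 1) + n) * JmuAux.key_rec μ hμ n k
  exact (tsum_congr hzero).trans tsum_zero
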